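/- arXiv:1610.08673 — 2 statements merged into one kernel-verified Lean document; each statement's English description precedes it below -/
import Mathlib

section
/- For M ≥ 1 the one-dimensional generating function χ_{2M}(y) = ((−1)^{M−1}/(2^{2M−1}√π (M−1)!)) · H_{2M−1}(y) e^{−y²}/y admits the representation χ_{2M}(y) = (1/√π) Σ_{ℓ=0}^{M−1} ((−1)^ℓ/(ℓ! 4^ℓ)) d^{2ℓ}/dy^{2ℓ} e^{−y²}. -/
open Polynomial

/-- Physicists' Hermite polynomials, via `H_0 = 1`, `H_{k+1}(x) = 2x H_k(x) - H_k'(x)`. -/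
noncomputable def hermitePoly : ℕ → Polynomial ℤ
  | 0 => 1
  | k + 1 => 2 * Polynomial.X * hermitePoly k - Polynomial.derivative (hermitePoly k)

lemma hermitePoly_succ (k : ℕ) : hermitePoly (k+1)
    = 2 * Polynomial.X * hermitePoly k - Polynomial.derivative (hermitePoly k) := rfl

lemma hermitePoly_deriv (n : ℕ) :
    Polynomial.derivative (hermitePoly (n+1)) = Polynomial.C (2*(n+1) : ℤ) * hermitePoly n := by
  induction n with
  | zero => simp [hermitePoly]
  | succ n ih =>
    rw [hermitePoly_succ (n+1)]
    simp only [derivative_sub, derivative_mul, ih, derivative_C, derivative_X,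
      Polynomial.derivative_ofNat, zero_mul, zero_add, mul_one, mul_zero, sub_zero]
    rw [hermitePoly_succ n]
    simp only [map_add, map_mul, map_ofNat, Polynomial.C_eq_natCast, Polynomial.C_1]
    push_cast
    ring

lemma hermitePoly_rec (n : ℕ) :
    hermitePoly (n+2) = 2 * Polynomial.X * hermitePoly (n+1)
      - ((2*(n+1) : ℕ) : Polynomial ℤ) * hermitePoly n := by
  rw [hermitePoly_succ (n+1), hermitePoly_deriv]
  norm_num

lemma aeval_hasDerivAt (p : Polynomial ℤ) (y : ℝ) :
    HasDerivAt (fun x : ℝ => Polynomial.aeval x p)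
      (Polynomial.aeval y (Polynomial.derivative p)) y := by
  have h := (p.map (Int.castRingHom ℝ)).hasDerivAt y
  simpa [Polynomial.aeval_def, Polynomial.eval₂_eq_eval_map, Polynomial.derivative_map] using h

lemma gauss_iter (n : ℕ) :
    iteratedDeriv n (fun s : ℝ => Real.exp (-s^2)) = fun y : ℝ =>
      (-1:ℝ)^n * Polynomial.aeval y (hermitePoly n) * Real.exp (-y^2) := by
  induction n with
  | zero => funext y; simp [hermitePoly]
  | succ n ih =>
    rw [iteratedDeriv_succ, ih]
    funext y
    have h2 : HasDerivAt (fun x : ℝ => Real.exp (-x^2)) (Real.exp (-y^2) * -(2*y)) y := by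
      have := ((hasDerivAt_pow 2 y).neg).exp
      simpa [pow_one] using this
    have h := ((aeval_hasDerivAt (hermitePoly n) y).const_mul ((-1:ℝ)^n)).mul h2
    rw [(show HasDerivAt (fun y : ℝ => (-1:ℝ)^n * Polynomial.aeval y (hermitePoly n) * Real.exp (-y^2)) _ y from h).deriv]
    rw [hermitePoly_succ n]
    simp only [map_sub, map_mul, Polynomial.aeval_X, map_ofNat]
    ring

lemma key (M : ℕ) (hM : 1 ≤ M) (y : ℝ) :
    (-1:ℝ)^(M-1) * Polynomial.aeval y (hermitePoly (2*M-1)) =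
      2 * 4^(M-1) * (Nat.factorial (M-1) : ℝ) *
        (y * ∑ ℓ ∈ Finset.range M, ((-1)^ℓ / ((Nat.factorial ℓ : ℝ) * 4^ℓ)) *
            Polynomial.aeval y (hermitePoly (2*ℓ))) := by
  induction M, hM using Nat.le_induction with
  | base =>
    norm_num [Finset.sum_range_one, hermitePoly_succ, show hermitePoly 0 = 1 from rfl, map_ofNat]
  | succ M hMge ih =>
    obtain ⟨m, rfl⟩ : ∃ m, M = m + 1 := ⟨M - 1, by omega⟩
    rw [show 2*(m+1)-1 = 2*m+1 from by omega, show (m+1)-1 = m from by omega] at ih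
    rw [show 2*(m+1+1)-1 = 2*m+3 from by omega, show (m+1+1)-1 = m+1 from by omega]
    have hrec : Polynomial.aeval y (hermitePoly (2*m+3)) =
        2*y*Polynomial.aeval y (hermitePoly (2*m+2))
          - (2*(2*(m:ℝ)+2)) * Polynomial.aeval y (hermitePoly (2*m+1)) := by
      rw [show 2*m+3 = (2*m+1)+2 from by omega, hermitePoly_rec (2*m+1)]
      rw [show (2*m+1)+1 = 2*m+2 from by omega]
      simp only [map_sub, map_mul, map_natCast, Polynomial.aeval_X, map_ofNat]
      push_cast
      ring
    have hfac : ((Nat.factorial (m+1)) : ℝ) ≠ 0 := Nat.cast_ne_zero.mpr (Nat.factorial_ne_zero _)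
    have h4 : (4:ℝ)^(m+1) ≠ 0 := by positivity
    have hinv : (((Nat.factorial (m+1)):ℝ) * 4^(m+1)) * ((((Nat.factorial (m+1)):ℝ) * 4^(m+1)))⁻¹
        = 1 := by field_simp
    rw [Finset.sum_range_succ, show 2*(m+1) = 2*m+2 from by omega, hrec]
    push_cast [Nat.factorial_succ] at hinv ⊢
    linear_combination (4*((m:ℝ)+1)) * ih +
      (2*(-1:ℝ)^m*y*Polynomial.aeval y (hermitePoly (2*m+2))) * hinv

/-- The one-dimensional generating function
`χ_{2M}(y) = ((-1)^{M-1}/(2^{2M-1} √π (M-1)!)) H_{2M-1}(y) e^{-y²} / y`. -/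
noncomputable def chiFun (M : ℕ) (y : ℝ) : ℝ :=
  ((-1) ^ (M - 1) / (2 ^ (2 * M - 1) * Real.sqrt Real.pi * (Nat.factorial (M - 1)))) *
    Polynomial.aeval y (hermitePoly (2 * M - 1)) * Real.exp (-y ^ 2) / y

/-- `χ_{2M}(y) = (1/√π) ∑_{ℓ=0}^{M-1} ((-1)^ℓ/(ℓ! 4^ℓ)) (d/dy)^{2ℓ} e^{-y²}`. -/
theorem stmt6 (M : ℕ) (hM : 1 ≤ M) (y : ℝ) (hy : y ≠ 0) :
    chiFun M y =
      (1 / Real.sqrt Real.pi) *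
        ∑ ℓ ∈ Finset.range M,
          ((-1) ^ ℓ / ((Nat.factorial ℓ : ℝ) * 4 ^ ℓ)) *
            iteratedDeriv (2 * ℓ) (fun s : ℝ => Real.exp (-s ^ 2)) y := by
  have hπ : Real.sqrt Real.pi ≠ 0 := (Real.sqrt_pos.mpr Real.pi_pos).ne'
  have hfac : ((Nat.factorial (M-1)) : ℝ) ≠ 0 := Nat.cast_ne_zero.mpr (Nat.factorial_ne_zero _)
  have h4 : (4:ℝ)^(M-1) ≠ 0 := by positivity
  have hE : Real.exp (-y^2) ≠ 0 := Real.exp_ne_zero _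
  have h2 : (2:ℝ)^(2*M-1) = 2 * 4^(M-1) := by
    rw [show 2*M-1 = 2*(M-1)+1 from by omega, pow_succ, pow_mul]
    norm_num [mul_comm]
  simp only [gauss_iter, pow_mul, neg_one_sq, one_pow, one_mul]
  rw [chiFun, h2, div_eq_iff hy]
  simp only [← mul_assoc]
  rw [← Finset.sum_mul]
  have hD : 2*4^(M-1)*((Nat.factorial (M-1)):ℝ)
      / (2*4^(M-1)*Real.sqrt Real.pi*((Nat.factorial (M-1)):ℝ)) = 1/Real.sqrt Real.pi := by
    rw [div_eq_div_iff (by positivity) hπ]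
    ring
  linear_combination
    (Real.exp (-y^2) / (2*4^(M-1)*Real.sqrt Real.pi*((Nat.factorial (M-1)):ℝ))) * key M hM y +
    (y * (∑ ℓ ∈ Finset.range M, ((-1:ℝ)^ℓ / ((Nat.factorial ℓ : ℝ) * 4^ℓ)) *
        Polynomial.aeval y (hermitePoly (2*ℓ))) * Real.exp (-y^2)) * hD
end

section
/- The function χ_{2M}(y) = ((−1)^{M−1}/(2^{2M−1}√π (M−1)!)) H_{2M−1}(y) e^{−y²}/y satisfies the moment conditions ∫_ℝ χ_{2M}(y) dy = 1 and ∫_ℝ y^k χ_{2M}(y) dy = 0 for 1 ≤ k ≤ 2M−1. -/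
open MeasureTheory
open Polynomial Real

noncomputable def HH (n : ℕ) : Polynomial ℝ := (hermitePoly n).map (algebraMap ℤ ℝ)

lemma HH_eval (n : ℕ) (y : ℝ) : (HH n).eval y = Polynomial.aeval y (hermitePoly n) := by
  rw [HH, eval_map, aeval_def]

lemma HH_succ (n : ℕ) : HH (n + 1) = 2 * X * HH n - derivative (HH n) := by
  simp [HH, hermitePoly, Polynomial.map_sub, Polynomial.map_mul, Polynomial.map_ofNat,
    Polynomial.map_X, derivative_map]

lemma HH_deriv (n : ℕ) : derivative (HH (n + 1)) = ((2 * (n + 1) : ℕ) : ℝ[X]) * HH n := by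
  induction n with
  | zero =>
      simp [HH_succ, HH, hermitePoly]
  | succ n ih =>
      rw [HH_succ (n + 1), derivative_sub]
      simp only [derivative_mul, derivative_ofNat, derivative_X, ih, derivative_natCast,
        zero_mul, mul_one, zero_add, one_mul]
      rw [HH_succ n]
      push_cast
      ring

lemma HH_comp_neg (n : ℕ) : (HH n).comp (-X) = (-1) ^ n * HH n := by
  induction n with
  | zero => simp [HH, hermitePoly]
  | succ n ih =>
      have hpow : ((-1 : ℝ[X])) ^ n = C ((-1) ^ n) := by
        rw [map_pow, map_neg, map_one]
      have hd : (derivative (HH n)).comp (-X) = - derivative ((HH n).comp (-X)) := by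
        rw [derivative_comp]
        simp [mul_comm]
      rw [HH_succ, sub_comp, mul_comp, mul_comp, ih, hd, ih, derivative_mul, hpow,
        derivative_C]
      simp only [ofNat_comp, X_comp, zero_mul, zero_add]
      rw [← hpow]
      push_cast
      ring

lemma HH_odd_eval_zero (m : ℕ) : (HH (2 * m + 1)).eval 0 = 0 := by
  have h := congrArg (Polynomial.eval (0:ℝ)) (HH_comp_neg (2 * m + 1))
  simp [eval_comp, pow_succ, pow_mul] at h
  linarith

lemma integrable_pow_gauss (n : ℕ) : Integrable fun y : ℝ => y ^ n * Real.exp (-y ^ 2) := by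
  have h := integrable_rpow_mul_exp_neg_mul_sq (b := 1) one_pos
    (s := n) (lt_of_lt_of_le neg_one_lt_zero (Nat.cast_nonneg n))
  simpa [Real.rpow_natCast, neg_mul, one_mul] using h

lemma integrable_eval_gauss (p : ℝ[X]) : Integrable fun y : ℝ => p.eval y * Real.exp (-y ^ 2) := by
  induction p using Polynomial.induction_on' with
  | add p q hp hq => simpa [add_mul] using hp.fun_add hq
  | monomial n a =>
      simpa [eval_monomial, mul_assoc] using (integrable_pow_gauss n).const_mul a

noncomputable def Ig (p : ℝ[X]) : ℝ := ∫ y : ℝ, p.eval y * Real.exp (-y ^ 2)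

lemma Ig_add (p q : ℝ[X]) : Ig (p + q) = Ig p + Ig q := by
  simp only [Ig, eval_add, add_mul]
  exact integral_add (integrable_eval_gauss p) (integrable_eval_gauss q)

lemma Ig_sub (p q : ℝ[X]) : Ig (p - q) = Ig p - Ig q := by
  simp only [Ig, eval_sub, sub_mul]
  exact integral_sub (integrable_eval_gauss p) (integrable_eval_gauss q)

lemma Ig_C_mul (a : ℝ) (p : ℝ[X]) : Ig (C a * p) = a * Ig p := by
  simp only [Ig, eval_mul, eval_C, mul_assoc]
  exact integral_const_mul a _

lemma Ig_deriv (p : ℝ[X]) : Ig (derivative p) = Ig (2 * X * p) := by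
  have hderiv : ∀ y : ℝ, HasDerivAt (fun y => p.eval y * Real.exp (-y ^ 2))
      ((derivative p - 2 * X * p).eval y * Real.exp (-y ^ 2)) y := by
    intro y
    have h1 : HasDerivAt (fun y : ℝ => -y ^ 2) (-(2 * y)) y := by
      simpa using (hasDerivAt_pow 2 y).fun_neg
    have h2 := h1.exp
    have h3 := (p.hasDerivAt y).fun_mul h2
    refine h3.congr_deriv ?_
    simp only [eval_sub, eval_mul, eval_ofNat, eval_X]
    ring
  have h0 : ∫ y : ℝ, (derivative p - 2 * X * p).eval y * Real.exp (-y ^ 2) = 0 :=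
    integral_eq_zero_of_hasDerivAt_of_integrable hderiv
      (integrable_eval_gauss _) (integrable_eval_gauss p)
  have h1 : Ig (derivative p - 2 * X * p) = 0 := h0
  rw [Ig_sub] at h1
  linarith

lemma Ig_zero_succ (n : ℕ) : Ig (HH (n + 1)) = 0 := by
  rw [HH_succ, Ig_sub, Ig_deriv]
  ring

lemma Ig_step (n j : ℕ) :
    Ig (X ^ (j + 1) * HH (n + 1)) = (j + 1 : ℝ) * Ig (X ^ j * HH n) := by
  have key : X ^ (j + 1) * HH (n + 1)
      = 2 * X * (X ^ (j + 1) * HH n) - derivative (X ^ (j + 1) * HH n)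
        + C ((j : ℝ) + 1) * (X ^ j * HH n) := by
    rw [HH_succ, derivative_mul, derivative_X_pow]
    simp only [Nat.add_sub_cancel]
    push_cast
    ring
  rw [key, Ig_add, Ig_sub, Ig_deriv, Ig_C_mul]
  ring

lemma Ig_moment (n j : ℕ) (h : j < n) : Ig (X ^ j * HH n) = 0 := by
  induction n generalizing j with
  | zero => omega
  | succ n ih =>
      cases j with
      | zero => simpa using Ig_zero_succ n
      | succ j => rw [Ig_step, ih j (by omega), mul_zero]

noncomputable def DD (m : ℕ) : ℝ[X] := divX (HH (2 * m + 1))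

lemma X_mul_DD (m : ℕ) : X * DD m = HH (2 * m + 1) := by
  have h := divX_mul_X_add (HH (2 * m + 1))
  rw [coeff_zero_eq_eval_zero, HH_odd_eval_zero, map_zero, add_zero, mul_comm] at h
  exact h

lemma DD_zero : DD 0 = C 2 := by
  have h1 : HH 1 = C 2 * X := by
    simp [HH, hermitePoly]
    rw [← map_ofNat (C : ℝ →+* ℝ[X]) 2]
  show divX (HH 1) = C 2
  rw [h1, ← pow_one (X : ℝ[X]), divX_C_mul, divX_X_pow]
  simp

lemma DD_succ (m : ℕ) : DD (m + 1) = 2 * HH (2 * m + 2) - ((4 * m + 4 : ℕ) : ℝ[X]) * DD m := by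
  apply mul_left_cancel₀ (X_ne_zero (R := ℝ))
  rw [X_mul_DD]
  have e1 : 2 * (m + 1) + 1 = (2 * m + 2) + 1 := by omega
  rw [e1, HH_succ]
  have e2 : 2 * m + 2 = (2 * m + 1) + 1 := by omega
  rw [show derivative (HH (2 * m + 2)) = derivative (HH ((2 * m + 1) + 1)) by rw [← e2],
    HH_deriv, ← X_mul_DD]
  push_cast
  ring

lemma Ig_DD (m : ℕ) :
    Ig (DD m) = (-1) ^ m * 4 ^ m * (Nat.factorial m) * (2 * Real.sqrt Real.pi) := by
  induction m with
  | zero =>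
      rw [DD_zero]
      have hg : ∫ y : ℝ, Real.exp (-y ^ 2) = Real.sqrt Real.pi := by
        simpa using integral_gaussian 1
      have : Ig (C 2) = 2 * ∫ y : ℝ, Real.exp (-y ^ 2) := by
        simp only [Ig, eval_C]
        exact integral_const_mul 2 _
      rw [this, hg]
      simp
  | succ m ih =>
      rw [DD_succ, Ig_sub, ← map_natCast (C : ℝ →+* ℝ[X]) (4 * m + 4), Ig_C_mul, ih,
        show (2 : ℝ[X]) * HH (2 * m + 2) = C 2 * HH ((2 * m + 1) + 1) by
          rw [← map_ofNat (C : ℝ →+* ℝ[X]) 2],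
        Ig_C_mul, Ig_zero_succ]
      push_cast [Nat.factorial_succ]
      ring


/-- `χ_{2M}` satisfies the moment conditions
`∫ χ_{2M} = 1` and `∫ y^k χ_{2M}(y) dy = 0` for `1 ≤ k ≤ 2M-1`. -/
theorem stmt7 (M : ℕ) (hM : 1 ≤ M) :
    (∫ y : ℝ, chiFun M y) = 1 ∧
      ∀ k : ℕ, 1 ≤ k → k ≤ 2 * M - 1 → (∫ y : ℝ, y ^ k * chiFun M y) = 0 := by
  obtain ⟨m, rfl⟩ : ∃ m, M = m + 1 := ⟨M - 1, by omega⟩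
  have hidx : 2 * (m + 1) - 1 = 2 * m + 1 := by omega
  have hm1 : (m + 1) - 1 = m := by omega
  set c : ℝ := (-1) ^ m / (2 ^ (2 * m + 1) * Real.sqrt Real.pi * (Nat.factorial m)) with hc
  have hchi : ∀ y : ℝ,
      chiFun (m + 1) y = c * (HH (2 * m + 1)).eval y * Real.exp (-y ^ 2) / y := by
    intro y
    rw [chiFun, hidx, hm1, HH_eval]
  have hfac : (Nat.factorial m : ℝ) ≠ 0 := Nat.cast_ne_zero.mpr (Nat.factorial_ne_zero m)
  have hsq : Real.sqrt Real.pi ≠ 0 := ne_of_gt (Real.sqrt_pos.mpr Real.pi_pos)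
  have h4 : (4 : ℝ) ^ m = 2 ^ (2 * m) := by
    rw [show (4 : ℝ) = 2 ^ 2 by norm_num, ← pow_mul]
  have hneg : ((-1 : ℝ)) ^ m * (-1) ^ m = 1 := by
    rw [← pow_add]; exact Even.neg_one_pow ⟨m, rfl⟩
  constructor
  · have h0 : ∀ᵐ y : ℝ, y ≠ 0 := by
      rw [ae_iff]
      simp only [not_not, Set.setOf_eq_eq_singleton]
      exact measure_singleton 0
    have hae : (fun y : ℝ => chiFun (m + 1) y)
        =ᵐ[volume] fun y => c * ((DD m).eval y * Real.exp (-y ^ 2)) := by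
      filter_upwards [h0] with y hy
      rw [hchi y, ← X_mul_DD m]
      simp only [eval_mul, eval_X]
      field_simp
    rw [integral_congr_ae hae, integral_const_mul]
    have hIg := Ig_DD m
    simp only [Ig] at hIg
    rw [hIg, hc]
    rw [div_mul_eq_mul_div, div_eq_one_iff_eq (by positivity)]
    rw [show ((-1:ℝ)) ^ m * ((-1) ^ m * 4 ^ m * ↑(Nat.factorial m) * (2 * Real.sqrt Real.pi))
        = ((-1) ^ m * (-1) ^ m) * (4 ^ m * 2) * ↑(Nat.factorial m) * Real.sqrt Real.pi by ring,
      hneg, h4, ← pow_succ]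
    ring
  · intro k hk1 hk2
    obtain ⟨j, rfl⟩ : ∃ j, k = j + 1 := ⟨k - 1, by omega⟩
    have hpt : ∀ y : ℝ, y ^ (j + 1) * chiFun (m + 1) y
        = c * ((X ^ j * HH (2 * m + 1)).eval y * Real.exp (-y ^ 2)) := by
      intro y
      rcases eq_or_ne y 0 with rfl | hy
      · have h00 : (HH (2 * m + 1)).eval 0 = 0 := HH_odd_eval_zero m
        simp [h00]
      · rw [hchi y]
        simp only [eval_mul, eval_pow, eval_X]
        field_simp
        ring
    rw [show (∫ y : ℝ, y ^ (j + 1) * chiFun (m + 1) y)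
        = ∫ y : ℝ, c * ((X ^ j * HH (2 * m + 1)).eval y * Real.exp (-y ^ 2)) from by
          exact congrArg _ (funext hpt),
      integral_const_mul]
    have hIg := Ig_moment (2 * m + 1) j (by omega)
    simp only [Ig] at hIg
    rw [hIg, mul_zero]
end
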